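/- Let p be an odd prime, N ≥ 1, and let H ∈ M_N(ℚ_p) be symmetric (H = Hᵗ). Then there exists A ∈ GL_N(ℤ_p) (i.e., A ∈ M_N(ℤ_p) with det(A) a p-adic unit) such that Aᵗ·H·A is a diagonal matrix. -/

import Mathlib

open Matrix

section AuxiliaryLemmas
variable {p : ℕ} [Fact p.Prime]


lemma QpMat.entry_mul_le {n : ℕ} {A B : Matrix (Fin n) (Fin n) ℚ_[p]} {a b : ℝ}
    (ha : 0 ≤ a) (hA : ∀ i j, ‖A i j‖ ≤ a) (hB : ∀ i j, ‖B i j‖ ≤ b) (i j : Fin n) :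
    ‖(A * B) i j‖ ≤ a * b := by
  rw [Matrix.mul_apply]
  have hb : 0 ≤ b := le_trans (norm_nonneg _) (hB i j)
  refine IsUltrametricDist.norm_sum_le_of_forall_le_of_nonneg (mul_nonneg ha hb) fun k _ => ?_
  rw [norm_mul]
  exact mul_le_mul (hA i k) (hB k j) (norm_nonneg _) ha

lemma QpMat.unimod_mul {n : ℕ} {A B : Matrix (Fin n) (Fin n) ℚ_[p]}
    (hA : ∀ i j, ‖A i j‖ ≤ 1) (hA' : ‖A.det‖ = 1)
    (hB : ∀ i j, ‖B i j‖ ≤ 1) (hB' : ‖B.det‖ = 1) :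
    (∀ i j, ‖(A * B) i j‖ ≤ 1) ∧ ‖(A * B).det‖ = 1 := by
  constructor
  · intro i j
    simpa using QpMat.entry_mul_le zero_le_one hA hB i j
  · rw [Matrix.det_mul, norm_mul, hA', hB', mul_one]

lemma QpMat.perm_conj {n : ℕ} (σ : Equiv.Perm (Fin n)) (H : Matrix (Fin n) (Fin n) ℚ_[p]) :
    ((σ.permMatrix ℚ_[p])ᵀ)ᵀ * H * (σ.permMatrix ℚ_[p])ᵀ = H.submatrix σ σ := by
  rw [Matrix.transpose_transpose]
  have h1 : σ.permMatrix ℚ_[p] * H = H.submatrix σ id := PEquiv.toMatrix_toPEquiv_mul σ H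
  have h2 : (σ.permMatrix ℚ_[p])ᵀ = Equiv.Perm.permMatrix ℚ_[p] σ.symm := by
    rw [← PEquiv.toMatrix_symm, ← Equiv.toPEquiv_symm]
  rw [h1, h2]
  rw [show Equiv.Perm.permMatrix ℚ_[p] σ.symm = (σ.symm).toPEquiv.toMatrix from rfl]
  rw [PEquiv.mul_toMatrix_toPEquiv, Equiv.symm_symm, Matrix.submatrix_submatrix]
  rfl

lemma QpMat.perm_entry_le {n : ℕ} (σ : Equiv.Perm (Fin n)) (i j : Fin n) :
    ‖(σ.permMatrix ℚ_[p])ᵀ i j‖ ≤ 1 := by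
  rw [Matrix.transpose_apply]
  rw [show Equiv.Perm.permMatrix ℚ_[p] σ = σ.toPEquiv.toMatrix from rfl, PEquiv.toMatrix_apply]
  split <;> simp

lemma QpMat.perm_det {n : ℕ} (σ : Equiv.Perm (Fin n)) :
    ‖((σ.permMatrix ℚ_[p])ᵀ).det‖ = 1 := by
  rw [Matrix.det_transpose, Matrix.det_permutation]
  rcases Int.units_eq_one_or (Equiv.Perm.sign σ) with h | h <;> rw [h] <;> simp

lemma Qp.norm_two_eq_one (hp : p ≠ 2) : ‖(2 : ℚ_[p])‖ = 1 := by
  have h2 : ((2 : ℤ) : ℚ_[p]) = 2 := by push_cast; ring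
  refine le_antisymm (h2 ▸ Padic.norm_int_le_one 2) ?_
  by_contra h
  push_neg at h
  rw [← h2, Padic.norm_intCast_lt_one_iff] at h
  have h' : p ∣ 2 := by exact_mod_cast h
  exact hp (((Nat.prime_dvd_prime_iff_eq Fact.out Nat.prime_two).mp h'))

lemma QpMat.transvection_entry_le {n : ℕ} {a b : Fin n} (hab : a ≠ b) {e : ℚ_[p]}
    (he : ‖e‖ ≤ 1) (i j : Fin n) : ‖Matrix.transvection a b e i j‖ ≤ 1 := by
  rw [Matrix.transvection, Matrix.add_apply]
  rcases eq_or_ne i j with rfl | hij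
  · have h1 : Matrix.single a b e i i = 0 := by
      rw [Matrix.single]
      have : ¬ (a = i ∧ b = i) := by rintro ⟨rfl, rfl⟩; exact hab rfl
      simp [this]
    simp [Matrix.one_apply, h1]
  · rw [Matrix.one_apply_ne hij, zero_add, Matrix.single]
    dsimp only [Matrix.of_apply]
    split
    · exact he
    · simp

lemma QpMat.transvection_transpose {n : ℕ} (a b : Fin n) (e : ℚ_[p]) :
    (Matrix.transvection a b e)ᵀ = Matrix.transvection b a e := by
  ext i j
  rw [Matrix.transpose_apply, Matrix.transvection, Matrix.transvection,
    Matrix.add_apply, Matrix.add_apply, Matrix.single, Matrix.single]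
  dsimp only [Matrix.of_apply]
  rw [Matrix.one_apply, Matrix.one_apply]
  congr 1
  · simp [eq_comm]
  · simp [and_comm]

lemma QpMat.exists_pivot {n : ℕ} (hp : p ≠ 2) (H : Matrix (Fin (n+1)) (Fin (n+1)) ℚ_[p])
    (hsymm : H = Hᵀ) (i₀ j₀ : Fin (n+1)) (hmax : ∀ i j, ‖H i j‖ ≤ ‖H i₀ j₀‖) :
    ∃ B : Matrix (Fin (n+1)) (Fin (n+1)) ℚ_[p],
      (∀ i j, ‖B i j‖ ≤ 1) ∧ ‖B.det‖ = 1 ∧ ‖(Bᵀ * H * B) 0 0‖ = ‖H i₀ j₀‖ := by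
  have key : ∃ (E : Matrix (Fin (n+1)) (Fin (n+1)) ℚ_[p]) (i₁ : Fin (n+1)),
      (∀ i j, ‖E i j‖ ≤ 1) ∧ ‖E.det‖ = 1 ∧ ‖(Eᵀ * H * E) i₁ i₁‖ = ‖H i₀ j₀‖ := by
    by_cases hdiag : ∃ i, ‖H i i‖ = ‖H i₀ j₀‖
    · obtain ⟨i, hi⟩ := hdiag
      refine ⟨1, i, fun i j => ?_, by simp, by simpa using hi⟩
      rw [Matrix.one_apply]
      split <;> simp
    · push_neg at hdiag
      have hlt : ∀ i, ‖H i i‖ < ‖H i₀ j₀‖ := fun i => lt_of_le_of_ne (hmax i i) (hdiag i)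
      have hne : i₀ ≠ j₀ := by rintro rfl; exact (hlt i₀).ne rfl
      have h2 : ‖(2:ℚ_[p])‖ = 1 := Qp.norm_two_eq_one hp
      have hsum : ∀ e : ℚ_[p], ‖e‖ = 1 →
          ‖H i₀ i₀ + H j₀ j₀ + 2*e*H i₀ j₀‖ ≤ ‖H i₀ j₀‖ := by
        intro e he
        refine le_trans (Padic.nonarchimedean _ _) (max_le (le_trans
          (Padic.nonarchimedean _ _) (max_le (hlt i₀).le (hlt j₀).le)) ?_)
        rw [norm_mul, norm_mul, h2, he, one_mul, one_mul]
      have heps : ∃ e : ℚ_[p], (e = 1 ∨ e = -1) ∧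
          ‖H i₀ i₀ + H j₀ j₀ + 2*e*H i₀ j₀‖ = ‖H i₀ j₀‖ := by
        by_contra hcon
        push_neg at hcon
        have hlt1 := lt_of_le_of_ne (hsum 1 (by simp)) (hcon 1 (Or.inl rfl))
        have hlt2 := lt_of_le_of_ne (hsum (-1) (by simp)) (hcon (-1) (Or.inr rfl))
        have h4 : ‖(4:ℚ_[p]) * H i₀ j₀‖ < ‖H i₀ j₀‖ := by
          have heq : (4:ℚ_[p]) * H i₀ j₀ = (H i₀ i₀ + H j₀ j₀ + 2*1*H i₀ j₀)
              + -(H i₀ i₀ + H j₀ j₀ + 2*(-1)*H i₀ j₀) := by ring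
          rw [heq]
          exact lt_of_le_of_lt (Padic.nonarchimedean _ _)
            (max_lt hlt1 (by rwa [norm_neg]))
        rw [show (4:ℚ_[p]) = 2*2 by norm_num, norm_mul, norm_mul, h2, one_mul, one_mul] at h4
        exact h4.false
      obtain ⟨e, he1, he2⟩ := heps
      have hee : e * e = 1 := by rcases he1 with rfl | rfl <;> ring
      have henorm : ‖e‖ ≤ 1 := by rcases he1 with rfl | rfl <;> simp
      refine ⟨Matrix.transvection j₀ i₀ e, i₀,
        QpMat.transvection_entry_le (Ne.symm hne) henorm,
        by rw [Matrix.det_transvection_of_ne _ _ (Ne.symm hne)]; simp, ?_⟩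
      have hval : ((Matrix.transvection j₀ i₀ e)ᵀ * H * Matrix.transvection j₀ i₀ e) i₀ i₀
          = H i₀ i₀ + H j₀ j₀ + 2*e*H i₀ j₀ := by
        rw [QpMat.transvection_transpose, Matrix.mul_assoc,
          Matrix.transvection_mul_apply_same, Matrix.mul_transvection_apply_same,
          Matrix.mul_transvection_apply_same]
        have hs : H j₀ i₀ = H i₀ j₀ := by conv_lhs => rw [hsymm, Matrix.transpose_apply]
        rw [hs]
        linear_combination H j₀ j₀ * hee
      rw [hval]
      exact he2
  obtain ⟨E, i₁, hE1, hE2, hE3⟩ := key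
  set σ := Equiv.swap (0 : Fin (n+1)) i₁ with hσ
  set Q := (σ.permMatrix ℚ_[p])ᵀ with hQ
  obtain ⟨hB1, hB2⟩ := QpMat.unimod_mul hE1 hE2 (QpMat.perm_entry_le σ) (QpMat.perm_det σ)
  refine ⟨E * Q, hB1, hB2, ?_⟩
  have hassoc : (E * Q)ᵀ * H * (E * Q) = Qᵀᵀᵀ * (Eᵀ * H * E) * Q := by
    simp only [Matrix.transpose_mul, Matrix.transpose_transpose, Matrix.mul_assoc]
  rw [hassoc, Matrix.transpose_transpose, QpMat.perm_conj σ (Eᵀ * H * E)]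
  rw [Matrix.submatrix_apply]
  rw [show σ 0 = i₁ from Equiv.swap_apply_left 0 i₁]
  exact hE3

lemma pivot_clear {n : ℕ} (H : Matrix (Fin (n+1)) (Fin (n+1)) ℚ_[p]) (hsymm : H = Hᵀ)
    (h0 : H 0 0 ≠ 0) (hmax : ∀ i j, ‖H i j‖ ≤ ‖H 0 0‖) :
    ∃ C : Matrix (Fin (n+1)) (Fin (n+1)) ℚ_[p],
      (∀ i j, ‖C i j‖ ≤ 1) ∧ ‖C.det‖ = 1 ∧
      (∀ j, j ≠ 0 → (Cᵀ * H * C) 0 j = 0) ∧ (∀ i, i ≠ 0 → (Cᵀ * H * C) i 0 = 0) := by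
  set R : Matrix (Fin (n+1)) (Fin (n+1)) ℚ_[p] :=
    Matrix.of (fun i j => if i = 0 ∧ j ≠ 0 then -(H 0 j / H 0 0) else 0) with hRdef
  have hRapp : ∀ i j, R i j = if i = 0 ∧ j ≠ 0 then -(H 0 j / H 0 0) else 0 := fun i j => rfl
  have hHR : ∀ a j, (H * R) a j = H a 0 * R 0 j := by
    intro a j
    rw [Matrix.mul_apply]
    refine Finset.sum_eq_single_of_mem 0 (Finset.mem_univ 0) fun k _ hk => ?_
    rw [hRapp]
    simp [hk]
  have hX : ∀ a j, (H * (1 + R)) a j = H a j + H a 0 * R 0 j := by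
    intro a j
    rw [Matrix.mul_add, Matrix.mul_one, Matrix.add_apply, hHR]
  have hRX : ∀ (X : Matrix (Fin (n+1)) (Fin (n+1)) ℚ_[p]) i j, (Rᵀ * X) i j = R 0 i * X 0 j := by
    intro X i j
    rw [Matrix.mul_apply]
    refine Finset.sum_eq_single_of_mem 0 (Finset.mem_univ 0) fun k _ hk => ?_
    rw [Matrix.transpose_apply, hRapp]
    simp [hk]
  have hM : ∀ i j, (((1 + R)ᵀ * H * (1 + R) : Matrix (Fin (n+1)) (Fin (n+1)) ℚ_[p])) i j
      = (H i j + H i 0 * R 0 j) + R 0 i * (H 0 j + H 0 0 * R 0 j) := by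
    intro i j
    rw [Matrix.mul_assoc, Matrix.transpose_add, Matrix.transpose_one, Matrix.add_mul,
      Matrix.one_mul, Matrix.add_apply, hX, hRX, hX]
  refine ⟨1 + R, ?_, ?_, ?_, ?_⟩
  · intro i j
    rcases eq_or_ne i j with rfl | hij
    · have : R i i = 0 := by rw [hRapp]; simp +contextual
      simp [Matrix.add_apply, Matrix.one_apply, this]
    · rw [Matrix.add_apply, Matrix.one_apply_ne hij, zero_add, hRapp]
      split
      · rw [norm_neg, norm_div]
        exact div_le_one_of_le₀ (hmax 0 j) (norm_nonneg _)
      · simp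
  · have htri : (1 + R).BlockTriangular id := by
      intro i j hij
      have hij' : i ≠ j := by exact fun h => absurd h (by simpa using hij.ne')
      have hi0 : i ≠ 0 := by
        intro h
        subst h
        exact absurd hij (by simpa using (Fin.zero_le j).not_lt)
      rw [Matrix.add_apply, Matrix.one_apply_ne hij', hRapp]
      simp [hi0]
    rw [Matrix.det_of_upperTriangular htri]
    have : ∀ i : Fin (n+1), (1 + R) i i = 1 := by
      intro i
      have : R i i = 0 := by rw [hRapp]; simp +contextual
      simp [Matrix.add_apply, Matrix.one_apply, this]
    simp [this]
  · intro j hj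
    rw [hM]
    have hR00 : R 0 0 = 0 := by rw [hRapp]; simp
    have hR0j : R 0 j = -(H 0 j / H 0 0) := by rw [hRapp]; simp [hj]
    rw [hR00, hR0j]
    field_simp
    ring
  · intro i hi
    rw [hM]
    have hR00 : R 0 0 = 0 := by rw [hRapp]; simp
    have hR0i : R 0 i = -(H 0 i / H 0 0) := by rw [hRapp]; simp [hi]
    have hHsym : H i 0 = H 0 i := by conv_lhs => rw [hsymm, Matrix.transpose_apply]
    rw [hR00, hR0i, hHsym]
    field_simp
    ring

lemma QpMat.conj_symm {n : ℕ} {H G : Matrix (Fin n) (Fin n) ℚ_[p]} (hsymm : H = Hᵀ) :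
    Gᵀ * H * G = (Gᵀ * H * G)ᵀ := by
  rw [Matrix.transpose_mul, Matrix.transpose_mul, Matrix.transpose_transpose, ← hsymm,
    Matrix.mul_assoc]

lemma QpMat.main (hp : p ≠ 2) : ∀ (n : ℕ) (H : Matrix (Fin n) (Fin n) ℚ_[p]), H = Hᵀ →
    ∃ A : Matrix (Fin n) (Fin n) ℚ_[p],
      (∀ i j, ‖A i j‖ ≤ 1) ∧ ‖A.det‖ = 1 ∧ (Aᵀ * H * A).IsDiag := by
  intro n
  induction n with
  | zero =>
    intro H _
    exact ⟨1, fun i j => i.elim0, by simp, fun i j _ => i.elim0⟩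
  | succ n ih =>
    intro H hsymm
    obtain ⟨⟨i₀, j₀⟩, -, hmax⟩ := Finset.exists_max_image Finset.univ
      (fun q : Fin (n+1) × Fin (n+1) => ‖H q.1 q.2‖) ⟨(0,0), Finset.mem_univ _⟩
    have hmax' : ∀ i j, ‖H i j‖ ≤ ‖H i₀ j₀‖ := fun i j => hmax (i, j) (Finset.mem_univ _)
    by_cases h0 : H i₀ j₀ = 0
    · refine ⟨1, fun i j => ?_, by simp, ?_⟩
      · rw [Matrix.one_apply]; split <;> simp
      · intro i j _
        rw [Matrix.transpose_one, Matrix.one_mul, Matrix.mul_one]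
        have := hmax' i j
        rw [h0, norm_zero] at this
        exact norm_le_zero_iff.mp this
    · -- step 1 : pivot to (0,0)
      obtain ⟨B, hB1, hB2, hB3⟩ := QpMat.exists_pivot hp H hsymm i₀ j₀ hmax'
      set H₁ := Bᵀ * H * B with hH₁
      have hH₁symm : H₁ = H₁ᵀ := QpMat.conj_symm hsymm
      have hm : 0 < ‖H i₀ j₀‖ := norm_pos_iff.mpr h0
      have hH₁00 : H₁ 0 0 ≠ 0 := by
        intro h
        rw [h, norm_zero] at hB3
        exact hm.ne' hB3.symm
      have hH₁max : ∀ i j, ‖H₁ i j‖ ≤ ‖H₁ 0 0‖ := by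
        intro i j
        rw [hH₁, hB3]
        have h1 : ∀ a b, ‖(H * B) a b‖ ≤ ‖H i₀ j₀‖ * 1 :=
          QpMat.entry_mul_le hm.le hmax' hB1
        have h2 : ∀ a b, ‖Bᵀ a b‖ ≤ 1 := fun a b => hB1 b a
        rw [Matrix.mul_assoc]
        calc ‖(Bᵀ * (H * B)) i j‖ ≤ 1 * (‖H i₀ j₀‖ * 1) :=
            QpMat.entry_mul_le (zero_le_one) h2 h1 i j
          _ = ‖H i₀ j₀‖ := by ring
      -- step 2 : clear first row and column
      obtain ⟨C, hC1, hC2, hCrow, hCcol⟩ := pivot_clear H₁ hH₁symm hH₁00 hH₁max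
      set M := Cᵀ * H₁ * C with hM
      have hMsymm : M = Mᵀ := QpMat.conj_symm hH₁symm
      -- step 3 : recurse on the lower-right minor
      set M' : Matrix (Fin n) (Fin n) ℚ_[p] := Matrix.of (fun i j => M i.succ j.succ) with hM'
      have hM'symm : M' = M'ᵀ := by
        ext i j
        have := congrFun (congrFun hMsymm i.succ) j.succ
        exact this
      obtain ⟨A', hA'1, hA'2, hA'3⟩ := ih M' hM'symm
      -- assemble block matrix A₂ = 1 ⊕ A'
      set A₂ : Matrix (Fin (n+1)) (Fin (n+1)) ℚ_[p] := Matrix.of (fun i j =>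
        if hi : i = 0 then (if j = 0 then (1:ℚ_[p]) else 0)
        else (if hj : j = 0 then 0 else A' (i.pred hi) (j.pred hj))) with hA₂
      have hA₂00 : A₂ 0 0 = 1 := by simp [hA₂]
      have hA₂0j : ∀ j : Fin (n+1), j ≠ 0 → A₂ 0 j = 0 := by
        intro j hj; simp [hA₂, hj]
      have hA₂i0 : ∀ i : Fin (n+1), i ≠ 0 → A₂ i 0 = 0 := by
        intro i hi; simp [hA₂, hi]
      have hA₂ss : ∀ (i j : Fin n), A₂ i.succ j.succ = A' i j := by
        intro i j
        simp [hA₂, Fin.succ_ne_zero]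
      -- entries of A₂
      have hA₂le : ∀ i j, ‖A₂ i j‖ ≤ 1 := by
        intro i j
        rcases eq_or_ne i 0 with rfl | hi
        · rcases eq_or_ne j 0 with rfl | hj
          · rw [hA₂00]; simp
          · rw [hA₂0j j hj]; simp
        · rcases eq_or_ne j 0 with rfl | hj
          · rw [hA₂i0 i hi]; simp
          · obtain ⟨i', rfl⟩ := Fin.exists_succ_eq.mpr hi
            obtain ⟨j', rfl⟩ := Fin.exists_succ_eq.mpr hj
            rw [hA₂ss]; exact hA'1 i' j'
      -- determinant of A₂
      have hA₂sub : A₂.submatrix Fin.succ Fin.succ = A' := by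
        ext i j; exact hA₂ss i j
      have hA₂det : ‖A₂.det‖ = 1 := by
        rw [Matrix.det_succ_row_zero]
        rw [Finset.sum_eq_single_of_mem 0 (Finset.mem_univ _) (fun j _ hj => by
          rw [hA₂0j j hj]; ring)]
        rw [hA₂00, Fin.succAbove_zero, hA₂sub]
        simpa using hA'2
      -- products
      have hMA₂0 : ∀ a, (M * A₂) a 0 = M a 0 := by
        intro a
        rw [Matrix.mul_apply]
        rw [Finset.sum_eq_single_of_mem 0 (Finset.mem_univ _) (fun k _ hk => by
          rw [hA₂i0 k hk]; ring)]
        rw [hA₂00, mul_one]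
      have hMA₂s : ∀ a (j' : Fin n), (M * A₂) a j'.succ = ∑ l', M a l'.succ * A' l' j' := by
        intro a j'
        rw [Matrix.mul_apply, Fin.sum_univ_succ, hA₂0j j'.succ (Fin.succ_ne_zero j'), mul_zero,
          zero_add]
        exact Finset.sum_congr rfl (fun k _ => by rw [hA₂ss])
      have hX0s : ∀ j' : Fin n, (A₂ᵀ * (M * A₂)) 0 j'.succ = 0 := by
        intro j'
        rw [Matrix.mul_apply]
        rw [Finset.sum_eq_single_of_mem 0 (Finset.mem_univ _) (fun k _ hk => by
          rw [Matrix.transpose_apply, hA₂i0 k hk]; ring)]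
        rw [Matrix.transpose_apply, hA₂00, one_mul, hMA₂s]
        refine Finset.sum_eq_zero (fun l' _ => ?_)
        rw [hCrow l'.succ (Fin.succ_ne_zero l'), zero_mul]
      have hXs0 : ∀ i' : Fin n, (A₂ᵀ * (M * A₂)) i'.succ 0 = 0 := by
        intro i'
        rw [Matrix.mul_apply]
        refine Finset.sum_eq_zero (fun k _ => ?_)
        rcases eq_or_ne k 0 with rfl | hk
        · rw [Matrix.transpose_apply, hA₂0j i'.succ (Fin.succ_ne_zero i'), zero_mul]
        · obtain ⟨k', rfl⟩ := Fin.exists_succ_eq.mpr hk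
          rw [hMA₂0, hCcol k'.succ (Fin.succ_ne_zero k'), mul_zero]
      have hXss : ∀ i' j' : Fin n,
          (A₂ᵀ * (M * A₂)) i'.succ j'.succ = (A'ᵀ * M' * A') i' j' := by
        intro i' j'
        rw [Matrix.mul_apply, Fin.sum_univ_succ, Matrix.transpose_apply,
          hA₂0j i'.succ (Fin.succ_ne_zero i'), zero_mul, zero_add]
        conv_rhs => rw [Matrix.mul_assoc, Matrix.mul_apply]
        refine Finset.sum_congr rfl (fun k _ => ?_)
        rw [Matrix.transpose_apply, Matrix.transpose_apply, hA₂ss, hMA₂s]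
        conv_rhs => rw [Matrix.mul_apply]
        exact congrArg _ (Finset.sum_congr rfl (fun l _ => rfl))
      -- final assembly
      refine ⟨B * C * A₂, ?_, ?_, ?_⟩
      · intro i j
        obtain ⟨hBC1, hBC2⟩ := QpMat.unimod_mul hB1 hB2 hC1 hC2
        exact (QpMat.unimod_mul hBC1 hBC2 hA₂le hA₂det).1 i j
      · obtain ⟨hBC1, hBC2⟩ := QpMat.unimod_mul hB1 hB2 hC1 hC2
        exact (QpMat.unimod_mul hBC1 hBC2 hA₂le hA₂det).2
      · have hre : (B * C * A₂)ᵀ * H * (B * C * A₂) = A₂ᵀ * (M * A₂) := by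
          rw [hM, hH₁]
          simp only [Matrix.transpose_mul, Matrix.mul_assoc]
        rw [hre]
        intro i j hij
        rcases eq_or_ne i 0 with rfl | hi
        · rcases eq_or_ne j 0 with rfl | hj
          · exact absurd rfl hij
          · obtain ⟨j', rfl⟩ := Fin.exists_succ_eq.mpr hj
            exact hX0s j'
        · obtain ⟨i', rfl⟩ := Fin.exists_succ_eq.mpr hi
          rcases eq_or_ne j 0 with rfl | hj
          · exact hXs0 i'
          · obtain ⟨j', rfl⟩ := Fin.exists_succ_eq.mpr hj
            rw [hXss]
            exact hA'3 (fun h => hij (congrArg Fin.succ h))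

end AuxiliaryLemmas

open Matrix

/-- Uniform diagonalization over `ℚ_p`, `p` odd: every symmetric matrix
`H ∈ M_N(ℚ_p)` can be diagonalized by a matrix `A` with entries in `ℤ_p`
and determinant a `p`-adic unit. -/
theorem symmetric_matrix_uniform_diagonalization_Qp
    (p : ℕ) [Fact p.Prime] (hp : p ≠ 2)
    (N : ℕ) (hN : 1 ≤ N)
    (H : Matrix (Fin N) (Fin N) ℚ_[p]) (hH : H = Hᵀ) :
    ∃ A : Matrix (Fin N) (Fin N) ℚ_[p],
      (∀ i j, ‖A i j‖ ≤ 1) ∧ ‖A.det‖ = 1 ∧ (Aᵀ * H * A).IsDiag := by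
  exact QpMat.main hp N H hH
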